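/- Let X_1,…,X_n ∈ ℝ^d satisfy ‖X_j‖² ≤ β for all j and ⟨X_i, X_j⟩ ≥ C for all i, j. Then ∑_{i=1}^n ‖∑_{j=1}^n (σ(⟨X_i, X_j⟩) − 1) X_j‖² ≤ n³ · exp(−2C) · β. Hence the squared Frobenius-norm difference between the all-to-all skip-gram repulsion gradient (rows ∑_j σ(⟨X_i, X_j⟩) X_j) and the dimension-mean regularizer gradient (rows ∑_j X_j) decays exponentially in the constriction lower bound C. -/

import Mathlib

open RealInnerProductSpace BigOperators

/-- The logistic sigmoid function `σ(x) = 1 / (1 + exp (-x))`. -/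
noncomputable def sigmoid (x : ℝ) : ℝ := 1 / (1 + Real.exp (-x))

lemma abs_sigmoid_sub_one_le (x : ℝ) : |sigmoid x - 1| ≤ Real.exp (-x) := by
  have hpos : 0 < 1 + Real.exp (-x) := by positivity
  have : sigmoid x - 1 = -(Real.exp (-x) / (1 + Real.exp (-x))) := by
    rw [sigmoid, div_sub_one hpos.ne']; ring
  rw [this, abs_neg, abs_of_nonneg (by positivity)]
  calc Real.exp (-x) / (1 + Real.exp (-x)) ≤ Real.exp (-x) / 1 := by
        apply div_le_div_of_nonneg_left (Real.exp_pos _).le one_pos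
        linarith [Real.exp_pos (-x)]
    _ = Real.exp (-x) := div_one _

/-- If `‖X j‖² ≤ β` for all `j` and `⟨X i, X j⟩ ≥ C` for all `i, j`, then
`∑ i, ‖∑ j, (σ(⟨X i, X j⟩) - 1) X j‖² ≤ n³ · exp(-2C) · β`. -/
theorem grad_diff_sq_frobenius_le {n d : ℕ} (X : Fin n → EuclideanSpace ℝ (Fin d))
    (β C : ℝ) (hβ : 0 < β)
    (hnorm : ∀ j, ‖X j‖ ^ 2 ≤ β)
    (hconstr : ∀ i j, C ≤ ⟪X i, X j⟫) :
    ∑ i, ‖∑ j, (sigmoid ⟪X i, X j⟫ - 1) • X j‖ ^ 2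
      ≤ (n : ℝ) ^ 3 * Real.exp (-(2 * C)) * β := by
  have hrow : ∀ i : Fin n, ‖∑ j, (sigmoid ⟪X i, X j⟫ - 1) • X j‖
      ≤ (n : ℝ) * (Real.exp (-C) * Real.sqrt β) := by
    intro i
    calc ‖∑ j, (sigmoid ⟪X i, X j⟫ - 1) • X j‖
        ≤ ∑ j, ‖(sigmoid ⟪X i, X j⟫ - 1) • X j‖ := norm_sum_le _ _
      _ ≤ ∑ _j : Fin n, Real.exp (-C) * Real.sqrt β := by
          apply Finset.sum_le_sum
          intro j _
          rw [norm_smul, Real.norm_eq_abs]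
          have h1 : |sigmoid ⟪X i, X j⟫ - 1| ≤ Real.exp (-C) := by
            refine (abs_sigmoid_sub_one_le _).trans ?_
            exact Real.exp_le_exp.mpr (by linarith [hconstr i j])
          have h2 : ‖X j‖ ≤ Real.sqrt β := by
            have := hnorm j
            nlinarith [Real.sq_sqrt hβ.le, Real.sqrt_nonneg β, norm_nonneg (X j),
              abs_nonneg (sigmoid ⟪X i, X j⟫ - 1)]
          exact mul_le_mul h1 h2 (norm_nonneg _) (Real.exp_pos _).le
      _ = (n : ℝ) * (Real.exp (-C) * Real.sqrt β) := by
          rw [Finset.sum_const, Finset.card_univ, Fintype.card_fin, nsmul_eq_mul]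
  calc ∑ i, ‖∑ j, (sigmoid ⟪X i, X j⟫ - 1) • X j‖ ^ 2
      ≤ ∑ _i : Fin n, ((n : ℝ) * (Real.exp (-C) * Real.sqrt β)) ^ 2 := by
        apply Finset.sum_le_sum
        intro i _
        exact pow_le_pow_left₀ (norm_nonneg _) (hrow i) 2
    _ = (n : ℝ) * ((n : ℝ) * (Real.exp (-C) * Real.sqrt β)) ^ 2 := by
        rw [Finset.sum_const, Finset.card_univ, Fintype.card_fin, nsmul_eq_mul]
    _ = (n : ℝ) ^ 3 * Real.exp (-(2 * C)) * β := by
        have h1 : Real.sqrt β ^ 2 = β := Real.sq_sqrt hβ.le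
        have h2 : Real.exp (-C) ^ 2 = Real.exp (-(2 * C)) := by
          rw [← Real.exp_nat_mul]; ring_nf
        rw [mul_pow, mul_pow, h1, h2]; ring
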